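/- Fix a positive integer m, set ξ = cos(π/(2(m+1))), and let T_{m+1} denote the monic Chebyshev polynomial of the first kind of degree m+1, characterized by T_{m+1}(cos θ) = 2^{−m}·cos((m+1)θ). Let Q be the unique monic real polynomial of degree m minimizing sup_{x ∈ [−1,1]} (1−x)·|Q(x)| over all monic real polynomials of degree m. Then for all x: (x−1)·Q(x) = (2/(ξ+1))^{m+1} · T_{m+1}( (x(ξ+1) + (ξ−1))/2 ). -/

import Mathlib

open Polynomial

lemma alt_lemma : ∀ (n : ℕ) (D : Polynomial ℝ) (x : ℕ → ℝ),
    (∀ i j, i < j → j ≤ n → x j < x i) → D.degree < (n : WithBot ℕ) →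
    (∀ k ≤ n, 0 ≤ (-1 : ℝ)^k * D.eval (x k)) → D = 0 := by
  intro n
  induction n with
  | zero =>
    intro D x _ hdeg _
    simpa using hdeg
  | succ n ih =>
    intro D x hx hdeg hs
    have hodd : D.eval (x n) * D.eval (x (n+1)) ≤ 0 := by
      have h1 := hs n (by omega)
      have h2 := hs (n+1) (by omega)
      rcases Nat.even_or_odd n with he | ho
      · rw [he.neg_one_pow] at h1
        rw [(he.add_one).neg_one_pow] at h2
        nlinarith
      · rw [ho.neg_one_pow] at h1
        rw [(ho.add_one).neg_one_pow] at h2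
        nlinarith
    obtain ⟨r, hr, hroot⟩ : ∃ r ∈ Set.uIcc (x (n+1)) (x n), D.eval r = 0 := by
      by_cases hz : D.eval (x (n+1)) = 0
      · exact ⟨x (n+1), Set.left_mem_uIcc, hz⟩
      have hc : ContinuousOn (fun y => D.eval y) (Set.uIcc (x (n+1)) (x n)) :=
        (Polynomial.continuous D).continuousOn
      have h0 : (0:ℝ) ∈ Set.uIcc (D.eval (x (n+1))) (D.eval (x n)) := by
        rcases lt_or_gt_of_ne hz with h | h
        · exact Set.mem_uIcc.2 (Or.inl ⟨h.le, by nlinarith⟩)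
        · exact Set.mem_uIcc.2 (Or.inr ⟨by nlinarith, h.le⟩)
      obtain ⟨r, hr, hre⟩ := intermediate_value_uIcc hc h0
      exact ⟨r, hr, hre⟩
    have hrmem : x (n+1) ≤ r ∧ r ≤ x n := by
      have := hx n (n+1) (by omega) le_rfl
      rw [Set.uIcc_of_le this.le] at hr
      exact ⟨hr.1, hr.2⟩
    set D1 := D /ₘ (X - C r) with hD1
    have hfac : (X - C r) * D1 = D :=
      (Polynomial.mul_divByMonic_eq_iff_isRoot).2 hroot
    by_cases hD10 : D1 = 0
    · rw [← hfac, hD10, mul_zero]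
    have hdeg1 : D1.degree < (n : WithBot ℕ) := by
      have hG : D.degree = 1 + D1.degree := by
        rw [← hfac, Polynomial.degree_mul, Polynomial.degree_X_sub_C]
      rw [hG] at hdeg
      rw [Polynomial.degree_eq_natDegree hD10] at hdeg ⊢
      rw [show ((n+1 : ℕ) : WithBot ℕ) = 1 + (n : WithBot ℕ) by push_cast; ring] at hdeg
      exact_mod_cast lt_of_add_lt_add_left hdeg
    have key : ∀ (y : ℝ) (k : ℕ), 0 ≤ (-1:ℝ)^k * D.eval y → r < y → 0 ≤ (-1:ℝ)^k * D1.eval y := by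
      intro y k h hy
      rw [← hfac] at h
      simp only [Polynomial.eval_mul, Polynomial.eval_sub, Polynomial.eval_X, Polynomial.eval_C] at h
      have h2 : 0 ≤ (y - r) * ((-1:ℝ)^k * D1.eval y) := by nlinarith
      nlinarith
    have keyneg : ∀ (y : ℝ) (k : ℕ), 0 ≤ (-1:ℝ)^(k+1) * D.eval y → y < r → 0 ≤ (-1:ℝ)^k * D1.eval y := by
      intro y k h hy
      rw [← hfac] at h
      simp only [Polynomial.eval_mul, Polynomial.eval_sub, Polynomial.eval_X, Polynomial.eval_C] at h
      have hpow : ((-1:ℝ))^(k+1) = -(-1:ℝ)^k := by ring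
      rw [hpow] at h
      have h2 : 0 ≤ (r - y) * ((-1:ℝ)^k * D1.eval y) := by nlinarith
      nlinarith
    rcases lt_or_eq_of_le hrmem.2 with hlt | heq
    · -- r < x n : use points x 0 .. x n
      have hD1z : D1 = 0 := by
        refine ih D1 x (fun i j hij hjn => hx i j hij (by omega)) hdeg1 ?_
        intro k hk
        refine key (x k) k (hs k (by omega)) ?_
        rcases eq_or_lt_of_le hk with h | h
        · rw [h]; exact hlt
        · exact lt_trans hlt (hx k n h (by omega))
      exact absurd hD1z hD10
    · -- r = x n : use points x 0 .. x (n-1), x (n+1)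
      have hD1z : D1 = 0 := by
        refine ih D1 (fun k => if k = n then x (n+1) else x k) ?_ hdeg1 ?_
        · intro i j hij hjn
          have hin : i ≠ n := by omega
          by_cases hjn' : j = n
          · simp only [hjn', if_pos rfl, if_neg hin]
            exact hx i (n+1) (by omega) le_rfl
          · simp only [if_neg hjn', if_neg hin]
            exact hx i j hij (by omega)
        · intro k hk
          show 0 ≤ (-1:ℝ)^k * D1.eval (if k = n then x (n+1) else x k)
          by_cases hkn : k = n
          · rw [if_pos hkn, hkn]
            refine keyneg (x (n+1)) n (hs (n+1) le_rfl) ?_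
            rw [heq]
            exact hx n (n+1) (by omega) le_rfl
          · simp only [if_neg hkn]
            refine key (x k) k (hs k (by omega)) ?_
            rw [heq]
            exact hx k n (by omega) (by omega)
      exact absurd hD1z hD10

set_option maxHeartbeats 2000000 in
theorem interval_minimiser_is_translated_chebyshev (m : ℕ) (hm : 1 ≤ m)
    (T : Polynomial ℝ) (hTm : T.Monic) (hTdeg : T.natDegree = m + 1)
    (hTcheb : ∀ θ : ℝ, T.eval (Real.cos θ) = (2 : ℝ) ^ (-(m : ℤ)) * Real.cos (((m : ℝ) + 1) * θ))
    (Q : Polynomial ℝ) (hQm : Q.Monic) (hQdeg : Q.natDegree = m)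
    (hQmin : sSup {r : ℝ | ∃ x ∈ Set.Icc (-1 : ℝ) 1, r = (1 - x) * |Q.eval x|} =
      sInf {r : ℝ | ∃ Q' : Polynomial ℝ, Q'.Monic ∧ Q'.natDegree = m ∧
        r = sSup {t : ℝ | ∃ x ∈ Set.Icc (-1 : ℝ) 1, t = (1 - x) * |Q'.eval x|}}) :
    ∀ x : ℝ, (x - 1) * Q.eval x =
      (2 / (Real.cos (Real.pi / (2 * ((m : ℝ) + 1))) + 1)) ^ (m + 1) *
        T.eval ((x * (Real.cos (Real.pi / (2 * ((m : ℝ) + 1))) + 1) +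
          (Real.cos (Real.pi / (2 * ((m : ℝ) + 1))) - 1)) / 2) := by
  have hπ := Real.pi_pos
  have hm1 : (0:ℝ) < (m:ℝ) + 1 := by positivity
  set θ0 : ℝ := Real.pi / (2 * ((m:ℝ) + 1)) with hθ0
  set ξ : ℝ := Real.cos θ0 with hξ
  have hθ0pos : 0 < θ0 := by positivity
  have hmr : (1:ℝ) ≤ (m:ℝ) := by exact_mod_cast hm
  have hθ0lt : θ0 < Real.pi / 2 := by
    rw [hθ0, div_lt_div_iff₀ (by positivity) (by norm_num)]
    nlinarith
  have hξpos : 0 < ξ := Real.cos_pos_of_mem_Ioo ⟨by linarith, hθ0lt⟩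
  have hξle1 : ξ ≤ 1 := Real.cos_le_one θ0
  have hξ1 : (0:ℝ) < ξ + 1 := by linarith
  set c : ℝ := (2 / (ξ + 1))^(m+1) with hc
  have hcpos : 0 < c := by positivity
  set p : Polynomial ℝ := C ((ξ+1)/2) * X + C ((ξ-1)/2) with hp
  set R : Polynomial ℝ := C c * T.comp p with hR
  have hpeval : ∀ x : ℝ, p.eval x = (x * (ξ + 1) + (ξ - 1)) / 2 := by
    intro x; simp [hp]; ring
  have hReval : ∀ x : ℝ, R.eval x = c * T.eval ((x * (ξ + 1) + (ξ - 1)) / 2) := by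
    intro x; rw [hR]; simp [Polynomial.eval_comp, hpeval x]
  have hζne : (ξ+1)/2 ≠ 0 := by positivity
  have hpdeg : p.natDegree = 1 := Polynomial.natDegree_linear hζne
  have hRdeg : R.natDegree = m + 1 := by
    rw [hR, Polynomial.natDegree_C_mul (ne_of_gt hcpos), Polynomial.natDegree_comp, hTdeg,
      hpdeg, mul_one]
  have hRlc : R.leadingCoeff = 1 := by
    rw [hR, Polynomial.leadingCoeff_mul, Polynomial.leadingCoeff_C,
      Polynomial.leadingCoeff_comp (by rw [hpdeg]; norm_num), hTm.leadingCoeff,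
      Polynomial.leadingCoeff_linear hζne, hTdeg, one_mul, hc, ← mul_pow]
    rw [div_mul_div_comm]
    rw [show (2:ℝ) * (ξ+1) = (ξ+1) * 2 by ring, div_self (by positivity), one_pow]
  have hRmonic : R.Monic := hRlc
  have hhalfpi : ((m:ℝ) + 1) * θ0 = Real.pi / 2 := by
    rw [hθ0]; field_simp
  have hroot1 : R.IsRoot 1 := by
    show R.eval 1 = 0
    rw [hReval]
    have h1 : ((1:ℝ) * (ξ + 1) + (ξ - 1)) / 2 = ξ := by ring
    rw [h1, hξ, hTcheb θ0, hhalfpi, Real.cos_pi_div_two, mul_zero, mul_zero]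
  set Qs : Polynomial ℝ := R /ₘ (X - C 1) with hQs
  have hfac : (X - C 1) * Qs = R := (Polynomial.mul_divByMonic_eq_iff_isRoot).2 hroot1
  have hQsmonic : Qs.Monic := (Polynomial.monic_X_sub_C 1).of_mul_monic_left (hfac ▸ hRmonic)
  have hQsdeg : Qs.natDegree = m := by
    have := (Polynomial.monic_X_sub_C (1:ℝ)).natDegree_mul hQsmonic
    rw [hfac, hRdeg, Polynomial.natDegree_X_sub_C] at this
    omega
  -- bound on T
  have hTbound : ∀ y ∈ Set.Icc (-1:ℝ) 1, |T.eval y| ≤ (2:ℝ)^(-(m:ℤ)) := by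
    intro y hy
    rw [← Real.cos_arccos hy.1 hy.2, hTcheb, abs_mul, abs_of_pos (by positivity : (0:ℝ) < (2:ℝ)^(-(m:ℤ)))]
    calc (2:ℝ)^(-(m:ℤ)) * |Real.cos (((m:ℝ)+1) * Real.arccos y)| ≤ (2:ℝ)^(-(m:ℤ)) * 1 := by
          gcongr; exact Real.abs_cos_le_one _
      _ = (2:ℝ)^(-(m:ℤ)) := mul_one _
  set E : ℝ := c * (2:ℝ)^(-(m:ℤ)) with hE
  have hEpos : 0 < E := by positivity
  have hmaps : ∀ x ∈ Set.Icc (-1:ℝ) 1, ((x * (ξ + 1) + (ξ - 1)) / 2) ∈ Set.Icc (-1:ℝ) 1 := by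
    intro x hx
    obtain ⟨h1, h2⟩ := hx
    constructor <;> nlinarith
  have hRbound : ∀ x ∈ Set.Icc (-1:ℝ) 1, |R.eval x| ≤ E := by
    intro x hx
    rw [hReval, abs_mul, abs_of_pos hcpos, hE]
    exact mul_le_mul_of_nonneg_left (hTbound _ (hmaps x hx)) hcpos.le
  -- sup sets
  have hSeq : ∀ Q' : Polynomial ℝ, {t : ℝ | ∃ x ∈ Set.Icc (-1:ℝ) 1, t = (1 - x) * |Q'.eval x|}
      = (fun x => (1 - x) * |Q'.eval x|) '' Set.Icc (-1:ℝ) 1 := by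
    intro Q'; ext t
    simp only [Set.mem_setOf_eq, Set.mem_image]
    constructor
    · rintro ⟨x, hx, rfl⟩; exact ⟨x, hx, rfl⟩
    · rintro ⟨x, hx, rfl⟩; exact ⟨x, hx, rfl⟩
  have hbdd : ∀ Q' : Polynomial ℝ,
      BddAbove {t : ℝ | ∃ x ∈ Set.Icc (-1:ℝ) 1, t = (1 - x) * |Q'.eval x|} := by
    intro Q'
    rw [hSeq]
    exact (isCompact_Icc.image (((continuous_const.sub continuous_id).mul
      (Polynomial.continuous Q').abs))).bddAbove
  have hmem0 : ∀ Q' : Polynomial ℝ,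
      (0:ℝ) ∈ {t : ℝ | ∃ x ∈ Set.Icc (-1:ℝ) 1, t = (1 - x) * |Q'.eval x|} := by
    intro Q'
    exact ⟨1, Set.right_mem_Icc.2 (by norm_num), by norm_num⟩
  have hne : ∀ Q' : Polynomial ℝ,
      {t : ℝ | ∃ x ∈ Set.Icc (-1:ℝ) 1, t = (1 - x) * |Q'.eval x|}.Nonempty :=
    fun Q' => ⟨0, hmem0 Q'⟩
  have hSupQs_le : sSup {t : ℝ | ∃ x ∈ Set.Icc (-1:ℝ) 1, t = (1 - x) * |Qs.eval x|} ≤ E := by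
    refine csSup_le (hne Qs) ?_
    rintro t ⟨x, hx, rfl⟩
    have hxle : x ≤ 1 := hx.2
    have h1 : (1 - x) * |Qs.eval x| = |R.eval x| := by
      rw [← hfac, Polynomial.eval_mul]
      simp only [Polynomial.eval_sub, Polynomial.eval_X, Polynomial.eval_C]
      rw [abs_mul, abs_of_nonpos (by linarith : x - 1 ≤ 0)]
      ring
    rw [h1]; exact hRbound x hx
  have hinfbdd : BddBelow {r : ℝ | ∃ Q' : Polynomial ℝ, Q'.Monic ∧ Q'.natDegree = m ∧
      r = sSup {t : ℝ | ∃ x ∈ Set.Icc (-1:ℝ) 1, t = (1 - x) * |Q'.eval x|}} := by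
    refine ⟨0, ?_⟩
    rintro r ⟨Q', _, _, rfl⟩
    exact le_csSup (hbdd Q') (hmem0 Q')
  have hQle : sSup {t : ℝ | ∃ x ∈ Set.Icc (-1:ℝ) 1, t = (1 - x) * |Q.eval x|} ≤ E := by
    rw [hQmin]
    exact le_trans (csInf_le hinfbdd ⟨Qs, hQsmonic, hQsdeg, rfl⟩) hSupQs_le
  -- alternation points
  set xp : ℕ → ℝ := fun j => (2 * Real.cos (((j:ℝ)+1) * Real.pi / ((m:ℝ)+1)) - ξ + 1)/(ξ+1) with hxp
  have hyval : ∀ j : ℕ, j ≤ m → (xp j * (ξ + 1) + (ξ - 1)) / 2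
      = Real.cos (((j:ℝ)+1) * Real.pi / ((m:ℝ)+1)) := by
    intro j hj
    rw [hxp]
    field_simp
    ring
  have hylt : ∀ j : ℕ, j ≤ m → Real.cos (((j:ℝ)+1) * Real.pi / ((m:ℝ)+1)) < ξ := by
    intro j hj
    rw [hξ]
    refine Real.cos_lt_cos_of_nonneg_of_le_pi hθ0pos.le ?_ ?_
    · rw [div_le_iff₀ hm1]
      have : (j:ℝ) + 1 ≤ (m:ℝ) + 1 := by exact_mod_cast Nat.succ_le_succ hj
      nlinarith
    · rw [hθ0, div_lt_div_iff₀ (by positivity) hm1]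
      have hj0 : (0:ℝ) ≤ (j:ℝ) := Nat.cast_nonneg j
      nlinarith [mul_pos hπ hm1]
  have hxmem : ∀ j : ℕ, j ≤ m → xp j ∈ Set.Icc (-1:ℝ) 1 := by
    intro j hj
    have hy1 : -1 ≤ Real.cos (((j:ℝ)+1) * Real.pi / ((m:ℝ)+1)) := Real.neg_one_le_cos _
    have hy2 := hylt j hj
    rw [hxp]
    constructor
    · rw [le_div_iff₀ hξ1]; nlinarith
    · rw [div_le_one hξ1]; nlinarith
  have hxlt1 : ∀ j : ℕ, j ≤ m → xp j < 1 := by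
    intro j hj
    have hy2 := hylt j hj
    rw [hxp, div_lt_one hξ1]
    nlinarith
  have hxdec : ∀ i j : ℕ, i < j → j ≤ m → xp j < xp i := by
    intro i j hij hj
    have hcos : Real.cos (((j:ℝ)+1) * Real.pi / ((m:ℝ)+1))
        < Real.cos (((i:ℝ)+1) * Real.pi / ((m:ℝ)+1)) := by
      refine Real.cos_lt_cos_of_nonneg_of_le_pi (by positivity) ?_ ?_
      · rw [div_le_iff₀ hm1]
        have : (j:ℝ) + 1 ≤ (m:ℝ) + 1 := by exact_mod_cast Nat.succ_le_succ hj
        nlinarith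
      · have hij' : (i:ℝ) + 1 < (j:ℝ) + 1 := by exact_mod_cast Nat.succ_lt_succ hij
        rw [div_lt_div_iff₀ hm1 hm1]
        nlinarith [mul_pos hπ hm1]
    rw [hxp]
    exact div_lt_div_of_pos_right (by linarith) hξ1
  have hRx : ∀ j : ℕ, j ≤ m → R.eval (xp j) = E * (-1:ℝ)^(j+1) := by
    intro j hj
    rw [hReval, hyval j hj, hTcheb]
    have harg : ((m:ℝ)+1) * (((j:ℝ)+1) * Real.pi / ((m:ℝ)+1)) = ((j+1 : ℕ) : ℝ) * Real.pi := by
      push_cast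
      field_simp
    rw [harg]
    have hcosval : Real.cos (((j+1 : ℕ) : ℝ) * Real.pi) = (-1:ℝ)^(j+1) := by
      simpa using Real.cos_add_nat_mul_pi 0 (j+1)
    rw [hcosval, hE]
    ring
  -- sign conditions for D = Qs - Q
  set D : Polynomial ℝ := Qs - Q with hD
  have hsign : ∀ j : ℕ, j ≤ m → 0 ≤ (-1:ℝ)^j * D.eval (xp j) := by
    intro j hj
    have hx1 : xp j < 1 := hxlt1 j hj
    have hpos : 0 < 1 - xp j := by linarith
    have hQsval : (1 - xp j) * Qs.eval (xp j) = E * (-1:ℝ)^j := by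
      have h1 : (xp j - 1) * Qs.eval (xp j) = R.eval (xp j) := by
        rw [← hfac, Polynomial.eval_mul]
        simp only [Polynomial.eval_sub, Polynomial.eval_X, Polynomial.eval_C]
      have h2 := hRx j hj
      have h3 : (1 - xp j) * Qs.eval (xp j) = -((xp j - 1) * Qs.eval (xp j)) := by ring
      rw [h3, h1, h2, pow_succ]
      ring
    have hQbnd : (1 - xp j) * |Q.eval (xp j)| ≤ E := by
      refine le_trans (le_csSup (hbdd Q) ?_) hQle
      exact ⟨xp j, hxmem j hj, rfl⟩
    have habs : |(-1:ℝ)^j * ((1 - xp j) * Q.eval (xp j))| = (1 - xp j) * |Q.eval (xp j)| := by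
      rw [abs_mul, abs_mul, abs_pow, abs_neg, abs_one, one_pow, one_mul,
        abs_of_pos hpos]
    have hkey : 0 ≤ (1 - xp j) * ((-1:ℝ)^j * D.eval (xp j)) := by
      have hDe : D.eval (xp j) = Qs.eval (xp j) - Q.eval (xp j) := by
        rw [hD, Polynomial.eval_sub]
      rw [hDe]
      have expand : (1 - xp j) * ((-1:ℝ)^j * (Qs.eval (xp j) - Q.eval (xp j)))
          = (-1:ℝ)^j * ((1 - xp j) * Qs.eval (xp j))
            - (-1:ℝ)^j * ((1 - xp j) * Q.eval (xp j)) := by ring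
      rw [expand, hQsval]
      have h4 : (-1:ℝ)^j * (E * (-1:ℝ)^j) = E := by
        rcases Nat.even_or_odd j with h | h
        · rw [h.neg_one_pow]; ring
        · rw [h.neg_one_pow]; ring
      rw [h4]
      have := neg_abs_le ((-1:ℝ)^j * ((1 - xp j) * Q.eval (xp j)))
      have h5 : (-1:ℝ)^j * ((1 - xp j) * Q.eval (xp j)) ≤ E := by
        calc (-1:ℝ)^j * ((1 - xp j) * Q.eval (xp j))
            ≤ |(-1:ℝ)^j * ((1 - xp j) * Q.eval (xp j))| := le_abs_self _
          _ = (1 - xp j) * |Q.eval (xp j)| := habs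
          _ ≤ E := hQbnd
      linarith
    exact nonneg_of_mul_nonneg_right hkey hpos
  -- degree of D
  have hDdeg : D.degree < (m : WithBot ℕ) := by
    have h1 : Qs.degree = Q.degree := by
      rw [Polynomial.degree_eq_natDegree hQsmonic.ne_zero,
        Polynomial.degree_eq_natDegree hQm.ne_zero, hQsdeg, hQdeg]
    have h2 := Polynomial.degree_sub_lt h1 hQsmonic.ne_zero
      (by rw [hQsmonic.leadingCoeff, hQm.leadingCoeff])
    rw [Polynomial.degree_eq_natDegree hQsmonic.ne_zero, hQsdeg] at h2
    exact h2
  have hD0 : D = 0 := alt_lemma m D xp hxdec hDdeg hsign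
  have hQeq : Qs = Q := by
    have := sub_eq_zero.mp hD0
    exact this
  -- conclusion
  intro x
  have h1 : (x - 1) * Q.eval x = R.eval x := by
    rw [← hQeq, ← hfac, Polynomial.eval_mul]
    simp only [Polynomial.eval_sub, Polynomial.eval_X, Polynomial.eval_C]
  rw [h1, hReval x, hc]
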